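/- Let m ≤ n, let ι : Fin m → Fin n be the canonical embedding, and let C^Q_{m,n} be the Hermitian matrix indexed by Fin m × Fin n with entries C^Q_{m,n} (i,p) (j,q) = C^Q (ι i, p) (ι j, q), where C^Q is the cost matrix on Fin n × Fin n. Then for all probability vectors pA ∈ ℝ^m and pB ∈ ℝ^n, T_{C^Q_{m,n}}(diag(pA), diag(pB)) equals the infimum over X ∈ Γ^cl(pA, pB) of (1/2)·[ ∑_{i<j in Fin m} ( X i (ι j) + X j (ι i) − 2·√(X i (ι j) · X j (ι i)) ) + ∑_{i ∈ Fin m} ∑_{p ∈ Fin n with p.val ≥ m} X i p ]. -/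

import Mathlib

open Matrix ComplexOrder

/-- A density matrix: positive semidefinite with trace one. -/
def IsDensityMatrix {k : Type*} [Fintype k] [DecidableEq k] (ρ : Matrix k k ℂ) : Prop :=
  ρ.PosSemidef ∧ ρ.trace = 1

/-- Partial trace over the second factor. -/
noncomputable def trB {m n : ℕ} (R : Matrix (Fin m × Fin n) (Fin m × Fin n) ℂ) :
    Matrix (Fin m) (Fin m) ℂ :=
  Matrix.of fun i j => ∑ p, R (i, p) (j, p)

/-- Partial trace over the first factor. -/
noncomputable def trA {m n : ℕ} (R : Matrix (Fin m × Fin n) (Fin m × Fin n) ℂ) :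
    Matrix (Fin n) (Fin n) ℂ :=
  Matrix.of fun p q => ∑ i, R (i, p) (i, q)

/-- The set of quantum couplings of two density matrices. -/
def QCouplings {m n : ℕ} (ρA : Matrix (Fin m) (Fin m) ℂ) (ρB : Matrix (Fin n) (Fin n) ℂ) :
    Set (Matrix (Fin m × Fin n) (Fin m × Fin n) ℂ) :=
  {R | IsDensityMatrix R ∧ trB R = ρA ∧ trA R = ρB}

/-- The quantum optimal transport cost. -/
noncomputable def QOT {m n : ℕ} (C : Matrix (Fin m × Fin n) (Fin m × Fin n) ℂ)
    (ρA : Matrix (Fin m) (Fin m) ℂ) (ρB : Matrix (Fin n) (Fin n) ℂ) : ℝ :=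
  sInf ((fun R => ((C * R).trace).re) '' QCouplings ρA ρB)

/-- The SWAP matrix on `Fin n × Fin n`. -/
noncomputable def swapM (n : ℕ) : Matrix (Fin n × Fin n) (Fin n × Fin n) ℂ :=
  Matrix.of fun x y => if x.1 = y.2 ∧ x.2 = y.1 then 1 else 0

/-- The quantum cost matrix `C^Q = (1/2) (I - S)`. -/
noncomputable def CQ (n : ℕ) : Matrix (Fin n × Fin n) (Fin n × Fin n) ℂ :=
  (1 / 2 : ℂ) • (1 - swapM n)

/-- Kronecker product of square matrices indexed by `Fin m` and `Fin n`. -/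
noncomputable def kron {m n : ℕ} (A : Matrix (Fin m) (Fin m) ℂ)
    (B : Matrix (Fin n) (Fin n) ℂ) : Matrix (Fin m × Fin n) (Fin m × Fin n) ℂ :=
  Matrix.of fun x y => A x.1 y.1 * B x.2 y.2

/-- The set of classical couplings of two probability vectors. -/
def clCouplings {m n : ℕ} (pA : Fin m → ℝ) (pB : Fin n → ℝ) :
    Set (Matrix (Fin m) (Fin n) ℝ) :=
  {X | (∀ i p, 0 ≤ X i p) ∧ (∀ i, ∑ p, X i p = pA i) ∧ (∀ p, ∑ i, X i p = pB p)}

/-- The classical optimal transport cost. -/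
noncomputable def clOT {m n : ℕ} (Ccl : Matrix (Fin m) (Fin n) ℝ)
    (pA : Fin m → ℝ) (pB : Fin n → ℝ) : ℝ :=
  sInf ((fun X => ∑ i, ∑ p, Ccl i p * X i p) '' clCouplings pA pB)

open Finset


variable {β : Type*} [AddCommMonoid β]

lemma sum_swap_lt {m : ℕ} (g : Fin m → Fin m → β) :
    ∑ i, ∑ j, (if j < i then g i j else 0) = ∑ i, ∑ j, (if i < j then g j i else 0) := by
  rw [Finset.sum_comm]

lemma sum_split_lt {m : ℕ} (f : Fin m → Fin m → β) :
    ∑ i, ∑ j, f i j =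
      (∑ i, f i i) + ∑ i, ∑ j, (if i < j then f i j + f j i else 0) := by
  have step : ∀ i j : Fin m, f i j = (if i = j then f i j else 0)
      + ((if i < j then f i j else 0) + (if j < i then f i j else 0)) := by
    intro i j
    rcases lt_trichotomy i j with hc | hc | hc
    · simp [hc, hc.ne, asymm hc, lt_irrefl]
    · simp [hc, lt_irrefl]
    · simp [hc, hc.ne', asymm hc]
  calc ∑ i, ∑ j, f i j
      = ∑ i, ∑ j, ((if i = j then f i j else 0)
          + ((if i < j then f i j else 0) + (if j < i then f i j else 0))) := by
        exact Finset.sum_congr rfl fun i _ => Finset.sum_congr rfl fun j _ => step i j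
    _ = (∑ i, f i i) + ∑ i, ∑ j, (if i < j then f i j + f j i else 0) := by
        simp only [Finset.sum_add_distrib, Finset.sum_ite_eq, Finset.mem_univ, if_true]
        rw [sum_swap_lt fun i j => f i j]
        congr 1
        rw [← Finset.sum_add_distrib]
        refine Finset.sum_congr rfl fun i _ => ?_
        rw [← Finset.sum_add_distrib]
        exact Finset.sum_congr rfl fun j _ => by rw [ite_add_ite]; simp

lemma sum_ne_split {m : ℕ} (f : Fin m → Fin m → β) :
    ∑ i, ∑ j, (if i ≠ j then f i j else 0) =
      ∑ i, ∑ j, (if i < j then f i j + f j i else 0) := by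
  have := sum_split_lt (fun i j => if i ≠ j then f i j else 0)
  simp only [ne_eq, not_true_eq_false, if_false, Finset.sum_const_zero, zero_add] at this
  rw [this]
  refine Finset.sum_congr rfl fun i _ => Finset.sum_congr rfl fun j _ => ?_
  by_cases hij : i < j
  · simp [hij, hij.ne, hij.ne']
  · simp [hij]

lemma sum_castLE {n m : ℕ} (h : m ≤ n) (f : Fin n → β) :
    ∑ p : Fin n, f p = (∑ j : Fin m, f (Fin.castLE h j)) + ∑ p : Fin n, (if m ≤ (p : ℕ) then f p else 0) := by
  have h1 : ∑ p : Fin n, f p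
      = ∑ p : Fin n, ((if (p : ℕ) < m then f p else 0) + (if m ≤ (p : ℕ) then f p else 0)) := by
    refine Finset.sum_congr rfl fun p _ => ?_
    by_cases hp : (p : ℕ) < m
    · simp [hp, Nat.not_le.mpr hp]
    · simp [hp, Nat.not_lt.mp hp]
  rw [h1, Finset.sum_add_distrib]
  congr 1
  rw [← Finset.sum_filter]
  refine (Finset.sum_bij' (fun (p : Fin n) hp => (⟨(p : ℕ), (Finset.mem_filter.mp hp).2⟩ : Fin m))
    (fun (j : Fin m) _ => Fin.castLE h j) ?_ ?_ ?_ ?_ ?_)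
  · intro a ha; exact Finset.mem_univ _
  · intro a ha; exact Finset.mem_filter.mpr ⟨Finset.mem_univ _, a.2⟩
  · intro a ha; exact Fin.ext rfl
  · intro a ha; exact Fin.ext rfl
  · intro a ha; congr 1


open scoped Matrix.Norms.L2Operator MatrixOrder in
lemma posSemidef_iff_eq_transpose_mul_self {ι : Type*} [Fintype ι] [DecidableEq ι]
    {A : Matrix ι ι ℂ} : A.PosSemidef ↔ ∃ B : Matrix ι ι ℂ, A = Bᴴ * B := by
  refine ⟨fun hA => ?_, ?_⟩
  · obtain ⟨B, rfl⟩ := CStarAlgebra.nonneg_iff_eq_star_mul_self.mp hA.nonneg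
    exact ⟨B, rfl⟩
  · rintro ⟨B, rfl⟩
    exact posSemidef_conjTranspose_mul_self B

lemma psd_diag_re_nonneg {ι : Type*} [Fintype ι] [DecidableEq ι] {R : Matrix ι ι ℂ}
    (hR : R.PosSemidef) (x : ι) : 0 ≤ (R x x).re := by
  obtain ⟨B, rfl⟩ := posSemidef_iff_eq_transpose_mul_self.mp hR
  rw [Matrix.mul_apply, Complex.re_sum]
  refine Finset.sum_nonneg fun k _ => ?_
  simp only [Matrix.conjTranspose_apply]
  have : star (B k x) * B k x = (Complex.normSq (B k x) : ℂ) := by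
    rw [Complex.star_def, ← Complex.normSq_eq_conj_mul_self]
  rw [this]
  simpa using Complex.normSq_nonneg _

private lemma inner_eq_aux {ι : Type*} [Fintype ι] [DecidableEq ι] (B : Matrix ι ι ℂ) (a b : ι) :
    (Bᴴ * B) a b = inner ℂ ((WithLp.equiv 2 (ι → ℂ)).symm (fun k => B k a))
      ((WithLp.equiv 2 (ι → ℂ)).symm (fun k => B k b)) := by
  rw [Matrix.mul_apply, PiLp.inner_apply]
  refine Finset.sum_congr rfl fun k _ => ?_
  simp only [WithLp.equiv_symm_apply, PiLp.toLp_apply, Matrix.conjTranspose_apply, RCLike.inner_apply,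
    starRingEnd_apply]
  exact mul_comm _ _

lemma psd_re_apply_le {ι : Type*} [Fintype ι] [DecidableEq ι] {R : Matrix ι ι ℂ}
    (hR : R.PosSemidef) (x y : ι) :
    (R x y).re ≤ Real.sqrt ((R x x).re * (R y y).re) := by
  obtain ⟨B, rfl⟩ := posSemidef_iff_eq_transpose_mul_self.mp hR
  have hxx : ((Bᴴ * B) x x).re = ‖(WithLp.equiv 2 (ι → ℂ)).symm (fun k => B k x)‖ ^ 2 := by
    rw [inner_eq_aux, inner_self_eq_norm_sq_to_K (𝕜 := ℂ)]
    norm_cast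
  have hyy : ((Bᴴ * B) y y).re = ‖(WithLp.equiv 2 (ι → ℂ)).symm (fun k => B k y)‖ ^ 2 := by
    rw [inner_eq_aux, inner_self_eq_norm_sq_to_K (𝕜 := ℂ)]
    norm_cast
  rw [inner_eq_aux, hxx, hyy]
  set u := (WithLp.equiv 2 (ι → ℂ)).symm (fun k => B k x)
  set v := (WithLp.equiv 2 (ι → ℂ)).symm (fun k => B k y)
  calc (inner ℂ u v).re ≤ ‖(inner ℂ u v)‖ := Complex.re_le_norm _
    _ ≤ ‖u‖ * ‖v‖ := norm_inner_le_norm u v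
    _ = Real.sqrt (‖u‖ ^ 2) * Real.sqrt (‖v‖ ^ 2) := by
        rw [Real.sqrt_sq (norm_nonneg _), Real.sqrt_sq (norm_nonneg _)]
    _ = Real.sqrt (‖u‖ ^ 2 * ‖v‖ ^ 2) := (Real.sqrt_mul (by positivity) _).symm

lemma trace_Cmn {m n : ℕ} (h : m ≤ n) (R : Matrix (Fin m × Fin n) (Fin m × Fin n) ℂ) :
    ((Matrix.of fun (x y : Fin m × Fin n) =>
        CQ n (Fin.castLE h x.1, x.2) (Fin.castLE h y.1, y.2)) * R).trace
      = (1/2 : ℂ) * (R.trace -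
          ∑ i : Fin m, ∑ j : Fin m, R (j, Fin.castLE h i) (i, Fin.castLE h j)) := by
  have hC : ∀ x y : Fin m × Fin n,
      (Matrix.of fun (x y : Fin m × Fin n) =>
        CQ n (Fin.castLE h x.1, x.2) (Fin.castLE h y.1, y.2)) x y
      = (1/2 : ℂ) * ((if x = y then 1 else 0)
          - (if Fin.castLE h x.1 = y.2 ∧ x.2 = Fin.castLE h y.1 then 1 else 0)) := by
    intro x y
    simp only [Matrix.of_apply, CQ, swapM, Matrix.smul_apply, Matrix.sub_apply,
      Matrix.one_apply, Matrix.of_apply, smul_eq_mul]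
    congr 2
    simp [Prod.ext_iff, Fin.castLE_inj]
  have expand : ((Matrix.of fun (x y : Fin m × Fin n) =>
        CQ n (Fin.castLE h x.1, x.2) (Fin.castLE h y.1, y.2)) * R).trace
      = ∑ x : Fin m × Fin n, ∑ y : Fin m × Fin n,
          (1/2 : ℂ) * ((if x = y then R y x else 0)
            - (if Fin.castLE h x.1 = y.2 ∧ x.2 = Fin.castLE h y.1 then R y x else 0)) := by
    simp only [Matrix.trace, Matrix.diag_apply, Matrix.mul_apply]
    refine Finset.sum_congr rfl fun x _ => Finset.sum_congr rfl fun y _ => ?_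
    rw [hC x y]
    split_ifs <;> ring
  rw [expand]
  simp only [← Finset.mul_sum]
  congr 1
  simp only [Finset.sum_sub_distrib]
  congr 1
  · -- diagonal part
    rw [Matrix.trace]
    refine Finset.sum_congr rfl fun x _ => ?_
    simp [Finset.sum_ite_eq, Matrix.diag_apply]
  · -- swap part
    simp only [Fintype.sum_prod_type]
    simp only [ite_and, Finset.sum_ite_eq, Finset.mem_univ, if_true]
    refine Finset.sum_congr rfl fun i _ => ?_
    rw [Finset.sum_comm]
    refine Finset.sum_congr rfl fun j _ => ?_
    simp [Finset.sum_ite_eq']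


noncomputable def RX (m n : ℕ) (h : m ≤ n) (X : Matrix (Fin m) (Fin n) ℝ) :
    Matrix (Fin m × Fin n) (Fin m × Fin n) ℂ :=
  Matrix.of fun x y =>
    if x = y then (X x.1 x.2 : ℂ)
    else if x.2 = Fin.castLE h y.1 ∧ y.2 = Fin.castLE h x.1 then
      ((Real.sqrt (X x.1 x.2 * X y.1 y.2) : ℝ) : ℂ)
    else 0

lemma RX_herm {m n : ℕ} (h : m ≤ n) (X : Matrix (Fin m) (Fin n) ℝ) :
    (RX m n h X).IsHermitian := by
  ext x y
  simp only [Matrix.conjTranspose_apply, RX, Matrix.of_apply]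
  by_cases h1 : y = x
  · subst h1; simp
  · have h2 : ¬ x = y := fun hh => h1 hh.symm
    rw [if_neg h1, if_neg h2]
    by_cases h3 : y.2 = Fin.castLE h x.1 ∧ x.2 = Fin.castLE h y.1
    · rw [if_pos h3, if_pos ⟨h3.2, h3.1⟩, mul_comm]
      simp [Complex.conj_ofReal]
    · have h4 : ¬ (x.2 = Fin.castLE h y.1 ∧ y.2 = Fin.castLE h x.1) := by tauto
      rw [if_neg h3, if_neg h4]
      simp

lemma RX_trB {m n : ℕ} (h : m ≤ n) (X : Matrix (Fin m) (Fin n) ℝ)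
    (i j : Fin m) :
    ∑ p : Fin n, RX m n h X (i, p) (j, p)
      = if i = j then ((∑ p, X i p : ℝ) : ℂ) else 0 := by
  by_cases hij : i = j
  · subst hij
    simp only [RX, Matrix.of_apply, if_pos rfl, if_true]
    push_cast
    rfl
  · rw [if_neg hij]
    refine Finset.sum_eq_zero fun p _ => ?_
    simp only [RX, Matrix.of_apply]
    rw [if_neg (by simp [Prod.ext_iff, hij]), if_neg ?_]
    rintro ⟨h1, h2⟩
    exact hij (Fin.castLE_inj.mp (h1.symm.trans h2)).symm

lemma RX_trA {m n : ℕ} (h : m ≤ n) (X : Matrix (Fin m) (Fin n) ℝ)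
    (p q : Fin n) :
    ∑ i : Fin m, RX m n h X (i, p) (i, q)
      = if p = q then ((∑ i, X i p : ℝ) : ℂ) else 0 := by
  by_cases hpq : p = q
  · subst hpq
    simp only [RX, Matrix.of_apply, if_pos rfl, if_true]
    push_cast
    rfl
  · rw [if_neg hpq]
    refine Finset.sum_eq_zero fun i _ => ?_
    simp only [RX, Matrix.of_apply]
    rw [if_neg (by simp [Prod.ext_iff, hpq]), if_neg ?_]
    rintro ⟨h1, h2⟩
    exact hpq (h1.trans h2.symm)

lemma block_expand (a b : ℝ) (ha : 0 ≤ a) (hb : 0 ≤ b) (u w : ℂ) :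
    star ((Real.sqrt a : ℂ) * u + (Real.sqrt b : ℂ) * w)
      * ((Real.sqrt a : ℂ) * u + (Real.sqrt b : ℂ) * w)
    = ((a:ℂ) * (star u * u) + (b:ℂ) * (star w * w))
      + ((Real.sqrt (a*b) : ℂ) * (star u * w) + (Real.sqrt (a*b) : ℂ) * (star w * u)) := by
  have h1 : ((Real.sqrt a : ℂ)) * (Real.sqrt a : ℂ) = (a:ℂ) := by
    rw [← Complex.ofReal_mul, Real.mul_self_sqrt ha]
  have h2 : ((Real.sqrt b : ℂ)) * (Real.sqrt b : ℂ) = (b:ℂ) := by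
    rw [← Complex.ofReal_mul, Real.mul_self_sqrt hb]
  have h3 : ((Real.sqrt a : ℂ)) * (Real.sqrt b : ℂ) = ((Real.sqrt (a*b) : ℝ) : ℂ) := by
    rw [← Complex.ofReal_mul, Real.sqrt_mul ha]
  simp only [star_add, star_mul', Complex.star_def, Complex.conj_ofReal]
  linear_combination ((starRingEnd ℂ) u * u) * h1 + ((starRingEnd ℂ) w * w) * h2
    + (((starRingEnd ℂ) u * w) + ((starRingEnd ℂ) w * u)) * h3

lemma RX_form {m n : ℕ} (h : m ≤ n) (X : Matrix (Fin m) (Fin n) ℝ)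
    (hX : ∀ i p, 0 ≤ X i p) (v : Fin m × Fin n → ℂ) :
    star v ⬝ᵥ (RX m n h X) *ᵥ v
      = (∑ i : Fin m, ∑ j : Fin m, if i < j then
            star ((Real.sqrt (X i (Fin.castLE h j)) : ℂ) * v (i, Fin.castLE h j)
                + (Real.sqrt (X j (Fin.castLE h i)) : ℂ) * v (j, Fin.castLE h i))
              * ((Real.sqrt (X i (Fin.castLE h j)) : ℂ) * v (i, Fin.castLE h j)
                + (Real.sqrt (X j (Fin.castLE h i)) : ℂ) * v (j, Fin.castLE h i))
          else 0)
        + ∑ x : Fin m × Fin n, (if x.2 = Fin.castLE h x.1 ∨ m ≤ ((x.2 : Fin n) : ℕ) then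
            (X x.1 x.2 : ℂ) * (star (v x) * v x) else 0) := by
  classical
  -- abbreviations
  set c : Fin m × Fin n → ℂ := fun x => (X x.1 x.2 : ℂ) * (star (v x) * v x) with hc
  set g : Fin m → Fin m → ℂ := fun i j =>
    ((Real.sqrt (X i (Fin.castLE h j) * X j (Fin.castLE h i)) : ℝ) : ℂ)
      * (star (v (i, Fin.castLE h j)) * v (j, Fin.castLE h i)) with hg
  -- Step 1: expand the quadratic form
  have step1 : star v ⬝ᵥ (RX m n h X) *ᵥ v
      = ∑ x : Fin m × Fin n, ∑ y : Fin m × Fin n, star (v x) * RX m n h X x y * v y := by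
    simp only [dotProduct, Matrix.mulVec, dotProduct, Pi.star_apply, Finset.mul_sum]
    refine Finset.sum_congr rfl fun x _ => Finset.sum_congr rfl fun y _ => by ring
  -- Step 2: pointwise split
  have step2 : ∀ x y : Fin m × Fin n, star (v x) * RX m n h X x y * v y
      = (if x = y then c x else 0)
        + (if y.2 = Fin.castLE h x.1 ∧ x.2 = Fin.castLE h y.1 ∧ x ≠ y then
            ((Real.sqrt (X x.1 x.2 * X y.1 y.2) : ℝ) : ℂ) * (star (v x) * v y) else 0) := by
    intro x y
    simp only [RX, Matrix.of_apply, hc]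
    by_cases h1 : x = y
    · subst h1; simp; ring
    · rw [if_neg h1, if_neg h1]
      by_cases h2 : x.2 = Fin.castLE h y.1 ∧ y.2 = Fin.castLE h x.1
      · rw [if_pos h2, if_pos ⟨h2.2, h2.1, h1⟩]; simp; ring
      · rw [if_neg h2, if_neg (by tauto)]; simp
  rw [step1]
  have step3 : ∑ x : Fin m × Fin n, ∑ y : Fin m × Fin n, star (v x) * RX m n h X x y * v y
      = (∑ x : Fin m × Fin n, c x)
        + ∑ i : Fin m, ∑ j : Fin m, (if i ≠ j then g i j else 0) := by
    simp only [step2, Finset.sum_add_distrib]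
    congr 1
    · refine Finset.sum_congr rfl fun x _ => ?_
      simp [Finset.sum_ite_eq]
    · -- reindex the cross sum
      simp only [Fintype.sum_prod_type]
      simp only [ite_and, Finset.sum_ite_eq', Finset.mem_univ, if_true]
      refine Finset.sum_congr rfl fun i _ => ?_
      rw [Finset.sum_comm]
      refine Finset.sum_congr rfl fun j _ => ?_
      rw [Finset.sum_ite_eq' Finset.univ (Fin.castLE h j)
        (fun p => if (i, p) ≠ (j, Fin.castLE h i) then
          ((Real.sqrt (X i p * X j (Fin.castLE h i)) : ℝ) : ℂ)
            * (star (v (i, p)) * v (j, Fin.castLE h i)) else 0)]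
      simp only [Finset.mem_univ, if_true, hg]
      refine if_congr ?_ rfl rfl
      constructor
      · intro hne heq; exact hne (by rw [heq])
      · intro hne heq; exact hne (congrArg Prod.fst heq)
  rw [step3, sum_ne_split]
  have hcsplit : (∑ x : Fin m × Fin n, c x)
      = ((∑ i, c (i, Fin.castLE h i))
        + ∑ i : Fin m, ∑ j : Fin m,
            if i < j then c (i, Fin.castLE h j) + c (j, Fin.castLE h i) else 0)
        + ∑ x : Fin m × Fin n, (if m ≤ ((x.2 : Fin n) : ℕ) then c x else 0) := by
    rw [Fintype.sum_prod_type]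
    calc ∑ i : Fin m, ∑ p : Fin n, c (i, p)
        = ∑ i : Fin m, ((∑ j : Fin m, c (i, Fin.castLE h j))
            + ∑ p : Fin n, (if m ≤ (p : ℕ) then c (i, p) else 0)) :=
          Finset.sum_congr rfl fun i _ => sum_castLE h (fun p => c (i, p))
      _ = (∑ i : Fin m, ∑ j : Fin m, c (i, Fin.castLE h j))
            + ∑ i : Fin m, ∑ p : Fin n, (if m ≤ (p : ℕ) then c (i, p) else 0) :=
          Finset.sum_add_distrib
      _ = _ := by
          rw [sum_split_lt (fun i j => c (i, Fin.castLE h j)), Fintype.sum_prod_type]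
  have hblock : ∀ i j : Fin m,
      star ((Real.sqrt (X i (Fin.castLE h j)) : ℂ) * v (i, Fin.castLE h j)
          + (Real.sqrt (X j (Fin.castLE h i)) : ℂ) * v (j, Fin.castLE h i))
        * ((Real.sqrt (X i (Fin.castLE h j)) : ℂ) * v (i, Fin.castLE h j)
          + (Real.sqrt (X j (Fin.castLE h i)) : ℂ) * v (j, Fin.castLE h i))
      = (c (i, Fin.castLE h j) + c (j, Fin.castLE h i)) + (g i j + g j i) := by
    intro i j
    simp only [hc, hg]
    rw [block_expand _ _ (hX _ _) (hX _ _),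
      mul_comm (X j (Fin.castLE h i)) (X i (Fin.castLE h j))]
    try ring
  have hsecond : ∑ x : Fin m × Fin n, (if x.2 = Fin.castLE h x.1 ∨ m ≤ ((x.2 : Fin n) : ℕ) then
        (X x.1 x.2 : ℂ) * (star (v x) * v x) else 0)
      = (∑ i, c (i, Fin.castLE h i))
        + ∑ x : Fin m × Fin n, (if m ≤ ((x.2 : Fin n) : ℕ) then c x else 0) := by
    have hsplit : ∀ x : Fin m × Fin n, (if x.2 = Fin.castLE h x.1 ∨ m ≤ ((x.2 : Fin n) : ℕ) then
          (X x.1 x.2 : ℂ) * (star (v x) * v x) else 0)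
        = (if x.2 = Fin.castLE h x.1 then c x else 0)
          + (if m ≤ ((x.2 : Fin n) : ℕ) then c x else 0) := by
      intro x
      by_cases hA : x.2 = Fin.castLE h x.1
      · have : ¬ m ≤ ((x.2 : Fin n) : ℕ) := by
          rw [hA]; simp [Fin.coe_castLE]
          try exact x.1.isLt
        simp [hA, this, hc]
      · by_cases hB : m ≤ ((x.2 : Fin n) : ℕ) <;> simp [hA, hB, hc]
    simp only [hsplit, Finset.sum_add_distrib]
    congr 1
    rw [Fintype.sum_prod_type]
    refine Finset.sum_congr rfl fun i _ => ?_
    rw [Finset.sum_ite_eq' Finset.univ (Fin.castLE h i) (fun p => c (i, p))]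
    simp
  rw [hsecond]
  have hfirst : ∑ i : Fin m, ∑ j : Fin m, (if i < j then
        star ((Real.sqrt (X i (Fin.castLE h j)) : ℂ) * v (i, Fin.castLE h j)
            + (Real.sqrt (X j (Fin.castLE h i)) : ℂ) * v (j, Fin.castLE h i))
          * ((Real.sqrt (X i (Fin.castLE h j)) : ℂ) * v (i, Fin.castLE h j)
            + (Real.sqrt (X j (Fin.castLE h i)) : ℂ) * v (j, Fin.castLE h i))
        else 0)
      = (∑ i : Fin m, ∑ j : Fin m,
          if i < j then c (i, Fin.castLE h j) + c (j, Fin.castLE h i) else 0)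
        + ∑ i : Fin m, ∑ j : Fin m, (if i < j then g i j + g j i else 0) := by
    simp only [hblock]
    rw [← Finset.sum_add_distrib]
    refine Finset.sum_congr rfl fun i _ => ?_
    rw [← Finset.sum_add_distrib]
    refine Finset.sum_congr rfl fun j _ => ?_
    split <;> simp
  rw [hcsplit, hfirst]
  abel

lemma RX_psd {m n : ℕ} (h : m ≤ n) (X : Matrix (Fin m) (Fin n) ℝ)
    (hX : ∀ i p, 0 ≤ X i p) : (RX m n h X).PosSemidef := by
  refine posSemidef_iff_dotProduct_mulVec.mpr ⟨RX_herm h X, fun v => ?_⟩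
  rw [RX_form h X hX v]
  refine add_nonneg (Finset.sum_nonneg fun i _ => Finset.sum_nonneg fun j _ => ?_)
    (Finset.sum_nonneg fun x _ => ?_)
  · split
    · exact star_mul_self_nonneg _
    · exact le_refl 0
  · split
    · have h1 : ((X x.1 x.2 : ℝ) : ℂ) * (star (v x) * v x)
          = star ((Real.sqrt (X x.1 x.2) : ℂ) * v x) * ((Real.sqrt (X x.1 x.2) : ℂ) * v x) := by
        rw [star_mul', Complex.star_def, Complex.conj_ofReal]
        have : ((Real.sqrt (X x.1 x.2) : ℂ)) * (Real.sqrt (X x.1 x.2) : ℂ) = ((X x.1 x.2 : ℝ) : ℂ) := by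
          rw [← Complex.ofReal_mul, Real.mul_self_sqrt (hX _ _)]
        calc ((X x.1 x.2 : ℝ) : ℂ) * (star (v x) * v x)
            = ((Real.sqrt (X x.1 x.2) : ℂ) * (Real.sqrt (X x.1 x.2) : ℂ)) * (star (v x) * v x) := by
              rw [this]
          _ = (Real.sqrt (X x.1 x.2) : ℂ) * star (v x) * ((Real.sqrt (X x.1 x.2) : ℂ) * v x) := by
              ring
      rw [h1]
      exact star_mul_self_nonneg _
    · exact le_refl 0

noncomputable def Fcl (m n : ℕ) (h : m ≤ n) (X : Matrix (Fin m) (Fin n) ℝ) : ℝ :=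
  (1 / 2) *
    ((∑ i : Fin m, ∑ j : Fin m,
        if i < j then
          X i (Fin.castLE h j) + X j (Fin.castLE h i) -
            2 * Real.sqrt (X i (Fin.castLE h j) * X j (Fin.castLE h i))
        else 0) +
      ∑ i : Fin m, ∑ p : Fin n, if m ≤ (p : ℕ) then X i p else 0)

lemma Fcl_eq {m n : ℕ} (h : m ≤ n) (X : Matrix (Fin m) (Fin n) ℝ)
    (hX : ∀ i p, 0 ≤ X i p) :
    Fcl m n h X = (1 / 2) * ((∑ i : Fin m, ∑ p : Fin n, X i p)
      - ∑ i : Fin m, ∑ j : Fin m, Real.sqrt (X i (Fin.castLE h j) * X j (Fin.castLE h i))) := by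
  have hT : (∑ i : Fin m, ∑ p : Fin n, X i p)
      = (∑ i : Fin m, ∑ j : Fin m, X i (Fin.castLE h j))
        + ∑ i : Fin m, ∑ p : Fin n, (if m ≤ (p : ℕ) then X i p else 0) := by
    rw [← Finset.sum_add_distrib]
    exact Finset.sum_congr rfl fun i _ => sum_castLE h (fun p => X i p)
  have hXs : (∑ i : Fin m, ∑ j : Fin m, X i (Fin.castLE h j))
      = (∑ i : Fin m, X i (Fin.castLE h i))
        + ∑ i : Fin m, ∑ j : Fin m,
            (if i < j then X i (Fin.castLE h j) + X j (Fin.castLE h i) else 0) :=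
    sum_split_lt _
  have hG : (∑ i : Fin m, ∑ j : Fin m, Real.sqrt (X i (Fin.castLE h j) * X j (Fin.castLE h i)))
      = (∑ i : Fin m, X i (Fin.castLE h i))
        + ∑ i : Fin m, ∑ j : Fin m,
            (if i < j then 2 * Real.sqrt (X i (Fin.castLE h j) * X j (Fin.castLE h i)) else 0) := by
    rw [sum_split_lt (fun i j => Real.sqrt (X i (Fin.castLE h j) * X j (Fin.castLE h i)))]
    congr 1
    · exact Finset.sum_congr rfl fun i _ => Real.sqrt_mul_self (hX _ _)
    · refine Finset.sum_congr rfl fun i _ => Finset.sum_congr rfl fun j _ => ?_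
      split
      · rw [mul_comm (X j (Fin.castLE h i)) (X i (Fin.castLE h j))]; ring
      · rfl
  have hS1 : (∑ i : Fin m, ∑ j : Fin m,
        if i < j then
          X i (Fin.castLE h j) + X j (Fin.castLE h i) -
            2 * Real.sqrt (X i (Fin.castLE h j) * X j (Fin.castLE h i))
        else 0)
      = (∑ i : Fin m, ∑ j : Fin m,
          (if i < j then X i (Fin.castLE h j) + X j (Fin.castLE h i) else 0))
        - ∑ i : Fin m, ∑ j : Fin m,
            (if i < j then 2 * Real.sqrt (X i (Fin.castLE h j) * X j (Fin.castLE h i)) else 0) := by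
    rw [← Finset.sum_sub_distrib]
    refine Finset.sum_congr rfl fun i _ => ?_
    rw [← Finset.sum_sub_distrib]
    refine Finset.sum_congr rfl fun j _ => ?_
    split <;> simp
  rw [Fcl, hS1, hT, hXs, hG]
  ring

lemma Fcl_nonneg {m n : ℕ} (h : m ≤ n) (X : Matrix (Fin m) (Fin n) ℝ)
    (hX : ∀ i p, 0 ≤ X i p) : 0 ≤ Fcl m n h X := by
  rw [Fcl]
  refine mul_nonneg (by norm_num) (add_nonneg
    (Finset.sum_nonneg fun i _ => Finset.sum_nonneg fun j _ => ?_)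
    (Finset.sum_nonneg fun i _ => Finset.sum_nonneg fun p _ => ?_))
  · split
    · have ha := hX i (Fin.castLE h j)
      have hb := hX j (Fin.castLE h i)
      have hs : Real.sqrt (X i (Fin.castLE h j) * X j (Fin.castLE h i))
          = Real.sqrt (X i (Fin.castLE h j)) * Real.sqrt (X j (Fin.castLE h i)) :=
        Real.sqrt_mul ha _
      nlinarith [sq_nonneg (Real.sqrt (X i (Fin.castLE h j)) - Real.sqrt (X j (Fin.castLE h i))),
        Real.sq_sqrt ha, Real.sq_sqrt hb]
    · exact le_refl 0
  · split
    · exact hX i p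
    · exact le_refl 0

lemma RX_coupling {m n : ℕ} (h : m ≤ n) {pA : Fin m → ℝ} {pB : Fin n → ℝ}
    (hpA : (∀ i, 0 ≤ pA i) ∧ ∑ i, pA i = 1)
    {X : Matrix (Fin m) (Fin n) ℝ} (hX : X ∈ clCouplings pA pB) :
    RX m n h X ∈ QCouplings (Matrix.diagonal fun i => (pA i : ℂ))
      (Matrix.diagonal fun p => (pB p : ℂ)) := by
  obtain ⟨hX0, hrow, hcol⟩ := hX
  refine ⟨⟨RX_psd h X hX0, ?_⟩, ?_, ?_⟩
  · -- trace = 1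
    rw [Matrix.trace]
    simp only [Matrix.diag_apply]
    rw [Fintype.sum_prod_type]
    have : ∀ i : Fin m, ∑ p : Fin n, RX m n h X (i, p) (i, p) = ((pA i : ℝ) : ℂ) := by
      intro i
      have : ∀ p : Fin n, RX m n h X (i, p) (i, p) = ((X i p : ℝ) : ℂ) := by
        intro p; simp [RX]
      rw [Finset.sum_congr rfl fun p _ => this p, ← Complex.ofReal_sum, hrow i]
    rw [Finset.sum_congr rfl fun i _ => this i, ← Complex.ofReal_sum, hpA.2]
    norm_num
  · ext i j
    rw [trB, Matrix.of_apply, RX_trB h X i j]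
    by_cases hij : i = j
    · subst hij; simp [Matrix.diagonal_apply_eq, hrow i]
    · simp [Matrix.diagonal_apply_ne _ hij, hij]
  · ext p q
    rw [trA, Matrix.of_apply, RX_trA h X p q]
    by_cases hpq : p = q
    · subst hpq; simp [Matrix.diagonal_apply_eq, hcol p]
    · simp [Matrix.diagonal_apply_ne _ hpq, hpq]

lemma RX_cost {m n : ℕ} (h : m ≤ n) (X : Matrix (Fin m) (Fin n) ℝ)
    (hX0 : ∀ i p, 0 ≤ X i p) :
    (((Matrix.of fun (x y : Fin m × Fin n) =>
        CQ n (Fin.castLE h x.1, x.2) (Fin.castLE h y.1, y.2)) * RX m n h X).trace).re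
      = Fcl m n h X := by
  rw [trace_Cmn]
  have h1 : (RX m n h X).trace = ((∑ i : Fin m, ∑ p : Fin n, X i p : ℝ) : ℂ) := by
    rw [Matrix.trace]
    simp only [Matrix.diag_apply]
    rw [Fintype.sum_prod_type]
    push_cast
    refine Finset.sum_congr rfl fun i _ => Finset.sum_congr rfl fun p _ => ?_
    simp [RX]
  have h2 : ∑ i : Fin m, ∑ j : Fin m, RX m n h X (j, Fin.castLE h i) (i, Fin.castLE h j)
      = ((∑ i : Fin m, ∑ j : Fin m,
          Real.sqrt (X i (Fin.castLE h j) * X j (Fin.castLE h i)) : ℝ) : ℂ) := by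
    push_cast
    refine Finset.sum_congr rfl fun i _ => Finset.sum_congr rfl fun j _ => ?_
    simp only [RX, Matrix.of_apply]
    by_cases hij : i = j
    · subst hij
      rw [if_pos rfl, Real.sqrt_mul_self (hX0 _ _)]
    · have hne : ((j, Fin.castLE h i) : Fin m × Fin n) ≠ (i, Fin.castLE h j) :=
        fun heq => hij (congrArg Prod.fst heq).symm
      rw [if_neg hne, mul_comm (X j (Fin.castLE h i)) (X i (Fin.castLE h j))]
      simp
  rw [h1, h2, Fcl_eq h X hX0, ← Complex.ofReal_sub]
  rw [show ((1:ℂ)/2) = (((1:ℝ)/2 : ℝ) : ℂ) from by norm_num]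
  rw [← Complex.ofReal_mul, Complex.ofReal_re]

lemma lower_bound {m n : ℕ} (h : m ≤ n) {pA : Fin m → ℝ} {pB : Fin n → ℝ}
    (hpA2 : ∑ i, pA i = 1)
    (R : Matrix (Fin m × Fin n) (Fin m × Fin n) ℂ)
    (hR : R ∈ QCouplings (Matrix.diagonal fun i => (pA i : ℂ))
      (Matrix.diagonal fun p => (pB p : ℂ))) :
    ∃ X ∈ clCouplings pA pB,
      Fcl m n h X ≤ (((Matrix.of fun (x y : Fin m × Fin n) =>
        CQ n (Fin.castLE h x.1, x.2) (Fin.castLE h y.1, y.2)) * R).trace).re := by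
  obtain ⟨⟨hpsd, htr⟩, hB, hA⟩ := hR
  set X : Matrix (Fin m) (Fin n) ℝ := Matrix.of fun i p => (R (i, p) (i, p)).re with hXdef
  have hX0 : ∀ i p, 0 ≤ X i p := fun i p => psd_diag_re_nonneg hpsd (i, p)
  have hrow : ∀ i, ∑ p, X i p = pA i := by
    intro i
    have := congrFun (congrFun hB i) i
    rw [trB, Matrix.of_apply, Matrix.diagonal_apply_eq] at this
    have := congrArg Complex.re this
    rw [Complex.re_sum] at this
    simpa [hXdef] using this
  have hcol : ∀ p, ∑ i, X i p = pB p := by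
    intro p
    have := congrFun (congrFun hA p) p
    rw [trA, Matrix.of_apply, Matrix.diagonal_apply_eq] at this
    have := congrArg Complex.re this
    rw [Complex.re_sum] at this
    simpa [hXdef] using this
  refine ⟨X, ⟨hX0, hrow, hcol⟩, ?_⟩
  rw [trace_Cmn h R]
  have hretr : (R.trace).re = 1 := by rw [htr]; norm_num
  have hmain : ((1/2 : ℂ) * (R.trace -
      ∑ i : Fin m, ∑ j : Fin m, R (j, Fin.castLE h i) (i, Fin.castLE h j))).re
      = (1/2) * ((R.trace).re
        - ∑ i : Fin m, ∑ j : Fin m, (R (j, Fin.castLE h i) (i, Fin.castLE h j)).re) := by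
    rw [show ((1:ℂ)/2) = (((1:ℝ)/2 : ℝ) : ℂ) from by norm_num]
    rw [Complex.re_ofReal_mul, Complex.sub_re, Complex.re_sum]
    congr 2
    exact Finset.sum_congr rfl fun i _ => (Complex.re_sum _ _)
  rw [hmain, hretr, Fcl_eq h X hX0]
  have hT : ∑ i : Fin m, ∑ p : Fin n, X i p = 1 := by
    rw [Finset.sum_congr rfl fun i _ => hrow i, hpA2]
  rw [hT]
  have hG : ∑ i : Fin m, ∑ j : Fin m, (R (j, Fin.castLE h i) (i, Fin.castLE h j)).re
      ≤ ∑ i : Fin m, ∑ j : Fin m,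
          Real.sqrt (X i (Fin.castLE h j) * X j (Fin.castLE h i)) := by
    refine Finset.sum_le_sum fun i _ => Finset.sum_le_sum fun j _ => ?_
    have := psd_re_apply_le hpsd (j, Fin.castLE h i) (i, Fin.castLE h j)
    refine this.trans (le_of_eq ?_)
    rw [mul_comm]
    rfl
  linarith

/-- closed form of the quantum optimal transport cost for diagonal
marginals and the restricted cost matrix `C^Q_{m,n}`, as a minimum of a concave-type
functional over classical couplings. -/
theorem qot_diag_CQmn (m n : ℕ) (h : m ≤ n)
    (pA : Fin m → ℝ) (pB : Fin n → ℝ)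
    (hpA : (∀ i, 0 ≤ pA i) ∧ ∑ i, pA i = 1)
    (hpB : (∀ p, 0 ≤ pB p) ∧ ∑ p, pB p = 1) :
    QOT (Matrix.of fun (x y : Fin m × Fin n) =>
        CQ n (Fin.castLE h x.1, x.2) (Fin.castLE h y.1, y.2))
      (Matrix.diagonal fun i => (pA i : ℂ)) (Matrix.diagonal fun p => (pB p : ℂ)) =
    sInf ((fun X : Matrix (Fin m) (Fin n) ℝ =>
        (1 / 2) *
          ((∑ i : Fin m, ∑ j : Fin m,
              if i < j then
                X i (Fin.castLE h j) + X j (Fin.castLE h i) -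
                  2 * Real.sqrt (X i (Fin.castLE h j) * X j (Fin.castLE h i))
              else 0) +
            ∑ i : Fin m, ∑ p : Fin n, if m ≤ (p : ℕ) then X i p else 0)) ''
      clCouplings pA pB) := by
  have hF : (fun X : Matrix (Fin m) (Fin n) ℝ =>
      (1 / 2) *
        ((∑ i : Fin m, ∑ j : Fin m,
            if i < j then
              X i (Fin.castLE h j) + X j (Fin.castLE h i) -
                2 * Real.sqrt (X i (Fin.castLE h j) * X j (Fin.castLE h i))
            else 0) +
          ∑ i : Fin m, ∑ p : Fin n, if m ≤ (p : ℕ) then X i p else 0))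
      = Fcl m n h := rfl
  rw [hF, QOT]
  set C : Matrix (Fin m × Fin n) (Fin m × Fin n) ℂ :=
    Matrix.of fun (x y : Fin m × Fin n) =>
      CQ n (Fin.castLE h x.1, x.2) (Fin.castLE h y.1, y.2) with hC
  set Q := QCouplings (Matrix.diagonal fun i => (pA i : ℂ))
    (Matrix.diagonal fun p => (pB p : ℂ)) with hQ
  have hBA : Fcl m n h '' clCouplings pA pB ⊆ (fun R => ((C * R).trace).re) '' Q := by
    rintro b ⟨X, hX, rfl⟩
    exact ⟨RX m n h X, RX_coupling h hpA hX, RX_cost h X hX.1⟩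
  have hprod : (Matrix.of fun i p => pA i * pB p) ∈ clCouplings pA pB := by
    refine ⟨fun i p => mul_nonneg (hpA.1 i) (hpB.1 p), fun i => ?_, fun p => ?_⟩
    · simp only [Matrix.of_apply, ← Finset.mul_sum, hpB.2, mul_one]
    · simp only [Matrix.of_apply, ← Finset.sum_mul, hpA.2, one_mul]
  have hBne : (Fcl m n h '' clCouplings pA pB).Nonempty := ⟨_, ⟨_, hprod, rfl⟩⟩
  have hAne : ((fun R => ((C * R).trace).re) '' Q).Nonempty :=
    ⟨_, hBA hBne.choose_spec⟩
  have hBbdd : BddBelow (Fcl m n h '' clCouplings pA pB) := by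
    refine ⟨0, fun b hb => ?_⟩
    obtain ⟨X, hX, rfl⟩ := hb
    exact Fcl_nonneg h X hX.1
  have hAbdd : BddBelow ((fun R => ((C * R).trace).re) '' Q) := by
    refine ⟨0, fun a ha => ?_⟩
    obtain ⟨R, hRmem, rfl⟩ := ha
    obtain ⟨X, hXmem, hle⟩ := lower_bound h hpA.2 R hRmem
    exact le_trans (Fcl_nonneg h X hXmem.1) hle
  apply le_antisymm
  · exact csInf_le_csInf hAbdd hBne hBA
  · refine le_csInf hAne fun a ha => ?_
    obtain ⟨R, hRmem, rfl⟩ := ha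
    obtain ⟨X, hXmem, hle⟩ := lower_bound h hpA.2 R hRmem
    exact le_trans (csInf_le hBbdd ⟨X, hXmem, rfl⟩) hle
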